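/- Failure of maximal ψ-epistemicity implies preparation contextuality of the maximally mixed state. Concretely: let d ≥ 2 be a natural number, let μ, μ⊥, ν, ν⊥ be probability measures on a measurable space (Λ, Σ), and let f : Λ → ℝ be measurable with 0 ≤ f(λ) ≤ 1 for every λ. Suppose (i) there exists a measurable set Ω with ν(Ω) = 1 and ∫_Ω f dμ < ∫_Λ f dμ, and (ii) ∫_Λ f dν⊥ = 0. Then the two convex mixtures are distinct measures: (1/d)·μ + ((d−1)/d)·μ⊥ ≠ (1/d)·ν + ((d−1)/d)·ν⊥. -/

import Mathlib

open MeasureTheory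
open scoped ENNReal

/-- Failure of maximal ψ-epistemicity implies preparation contextuality of the maximally
mixed state: given probability measures `μ, μ⊥, ν, ν⊥` and a `[0,1]`-valued measurable
response function `f` such that (i) some measurable `Ω` has `ν Ω = 1` but
`∫_Ω f dμ < ∫ f dμ`, and (ii) `∫ f dν⊥ = 0`, the two convex mixtures
`(1/d)μ + ((d−1)/d)μ⊥` and `(1/d)ν + ((d−1)/d)ν⊥` are distinct measures. -/
theorem stmt7 {Λ : Type*} [MeasurableSpace Λ] (d : ℕ) (hd : 2 ≤ d)
    (μ μperp ν νperp : Measure Λ)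
    [IsProbabilityMeasure μ] [IsProbabilityMeasure μperp]
    [IsProbabilityMeasure ν] [IsProbabilityMeasure νperp]
    (f : Λ → ℝ) (hf : Measurable f)
    (hf0 : ∀ l, 0 ≤ f l) (hf1 : ∀ l, f l ≤ 1)
    (hi : ∃ Ω : Set Λ, MeasurableSet Ω ∧ ν Ω = 1 ∧
      ∫ l in Ω, f l ∂μ < ∫ l, f l ∂μ)
    (hii : ∫ l, f l ∂νperp = 0) :
    (1 / (d : ℝ≥0∞)) • μ + (((d : ℝ≥0∞) - 1) / d) • μperp ≠
      (1 / (d : ℝ≥0∞)) • ν + (((d : ℝ≥0∞) - 1) / d) • νperp := by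
  obtain ⟨Ω, hΩm, hνΩ, hlt⟩ := hi
  set g : Λ → ℝ≥0∞ := fun l => ENNReal.ofReal (f l) with hg
  have hgm : Measurable g := hf.ennreal_ofReal
  -- integrability of f w.r.t. any probability measure
  have hint : ∀ (ρ : Measure Λ) [IsProbabilityMeasure ρ], Integrable f ρ := by
    intro ρ _
    refine ⟨hf.aestronglyMeasurable, ?_⟩
    exact HasFiniteIntegral.of_bounded (C := 1)
      (Filter.Eventually.of_forall fun l => by
        rw [Real.norm_eq_abs, abs_of_nonneg (hf0 l)]; exact hf1 l)
  -- ∫⁻ g dνperp = 0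
  have hgν : ∫⁻ l, g l ∂νperp = 0 := by
    have heq : ∫ l, f l ∂νperp = (∫⁻ l, g l ∂νperp).toReal :=
      integral_eq_lintegral_of_nonneg_ae (Filter.Eventually.of_forall hf0)
        hf.aestronglyMeasurable
    have hfin : ∫⁻ l, g l ∂νperp ≠ ∞ := by
      have hle : ∫⁻ l, g l ∂νperp ≤ 1 := by
        calc ∫⁻ l, g l ∂νperp ≤ ∫⁻ _, 1 ∂νperp :=
              lintegral_mono fun l => ENNReal.ofReal_le_one.mpr (hf1 l)
          _ = 1 := by simp
      exact ne_top_of_le_ne_top ENNReal.one_ne_top hle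
    rw [hii] at heq
    exact (ENNReal.toReal_eq_zero_iff _).mp heq.symm |>.resolve_right hfin
  -- ∫⁻ over Ωᶜ w.r.t. μ is positive
  have hpos : 0 < ∫⁻ l in Ωᶜ, g l ∂μ := by
    have hsplit : ∫ l in Ω, f l ∂μ + ∫ l in Ωᶜ, f l ∂μ = ∫ l, f l ∂μ :=
      integral_add_compl hΩm (hint μ)
    have hfc : 0 < ∫ l in Ωᶜ, f l ∂μ := by linarith
    have heq : ∫ l in Ωᶜ, f l ∂μ = (∫⁻ l in Ωᶜ, g l ∂μ).toReal :=
      integral_eq_lintegral_of_nonneg_ae (Filter.Eventually.of_forall hf0)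
        hf.aestronglyMeasurable
    rw [heq] at hfc
    exact ENNReal.toReal_pos_iff.mp hfc |>.1
  intro h
  have hL : ∫⁻ l in Ωᶜ, g l
      ∂((1 / (d : ℝ≥0∞)) • μ + (((d : ℝ≥0∞) - 1) / d) • μperp)
      = ∫⁻ l in Ωᶜ, g l
      ∂((1 / (d : ℝ≥0∞)) • ν + (((d : ℝ≥0∞) - 1) / d) • νperp) := by rw [h]
  rw [Measure.restrict_add, Measure.restrict_smul, Measure.restrict_smul,
    Measure.restrict_add, Measure.restrict_smul, Measure.restrict_smul,
    lintegral_add_measure, lintegral_add_measure,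
    lintegral_smul_measure, lintegral_smul_measure,
    lintegral_smul_measure, lintegral_smul_measure] at hL
  have hνc : ν Ωᶜ = 0 := by
    have := measure_compl hΩm (measure_ne_top ν Ω)
    simp [hνΩ] at this; simpa using this
  have hz1 : ∫⁻ l in Ωᶜ, g l ∂ν = 0 := by
    rw [Measure.restrict_eq_zero.mpr hνc]; simp
  have hz2 : ∫⁻ l in Ωᶜ, g l ∂νperp = 0 :=
    le_antisymm (le_trans (lintegral_mono' Measure.restrict_le_self le_rfl) hgν.le)
      (zero_le)
  rw [hz1, hz2] at hL
  simp only [mul_zero, add_zero, smul_zero, smul_eq_mul] at hL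
  have hd0 : (1 / (d : ℝ≥0∞)) ≠ 0 := by
    simp only [ne_eq, ENNReal.div_eq_zero_iff, one_ne_zero, false_or, not_or]
    exact ENNReal.natCast_ne_top d
  have : (0 : ℝ≥0∞) < 1 / (d : ℝ≥0∞) * ∫⁻ l in Ωᶜ, g l ∂μ :=
    ENNReal.mul_pos hd0 hpos.ne'
  have hle : 1 / (d : ℝ≥0∞) * ∫⁻ l in Ωᶜ, g l ∂μ ≤ 0 := by
    rw [← hL] at *
    exact le_self_add.trans hL.le |>.trans (le_of_eq rfl) |>.trans (by rw [hL]) |>.trans le_rfl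
  exact absurd (hle.trans_lt this) (lt_irrefl _)
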